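/- arXiv:1107.3832 — 2 statements merged into one kernel-verified Lean document; each statement's English description precedes it below -/
import Mathlib

section
/- Let F be a number field of degree g over ℚ with ε = Σᵢ rᵢ ⊗ sᵢ the canonical element of F ⊗_ℚ F built from a basis and its trace-dual basis. Let Λ¹ = {xε : x ∈ F} ⊂ F ⊗_ℚ F, and consider the quotient S_ℚ(F) of F ⊗_ℚ F by the relations a⊗b − b⊗a, with the induced pairing ⟨a⊗b, c⊗d⟩ = Tr(ac)Tr(bd). Define the evaluation map ev : S_ℚ(F) → F by ev(s⊗t) = st. Then an element α ∈ S_ℚ(F) annihilates Λ¹ (i.e. pairs to zero with every element of Λ¹) if and only if ev(α) = 0. -/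
open TensorProduct

/-- An element `α` of the (symmetric quotient of the) tensor square of a number field `F`
annihilates `Λ¹ = {x·ε : x ∈ F}` under the pairing `⟨a⊗b, c⊗d⟩ = Tr(ac)Tr(bd)` if and only if
its image under the evaluation map `ev(s⊗t) = st` is zero.  (Both the pairing against the
symmetric elements `x·ε` and the evaluation map descend to the symmetric quotient `S_ℚ(F)`,
so the statement for all `α ∈ F ⊗_ℚ F` is equivalent to the statement on `S_ℚ(F)`.) -/
theorem stmt3 (F : Type) [Field F] [NumberField F]
    (g : ℕ) (hg : Module.finrank ℚ F = g)
    (r : Module.Basis (Fin g) ℚ F) (s' : Fin g → F)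
    (hdual : ∀ i j, Algebra.trace ℚ F (r i * s' j) = if i = j then 1 else 0)
    (α : F ⊗[ℚ] F) :
    (∀ x : F,
      ((Algebra.traceForm ℚ F).tmul (Algebra.traceForm ℚ F)) α
        (∑ i, (x * r i) ⊗ₜ[ℚ] s' i) = 0)
      ↔ LinearMap.mul' ℚ F α = 0 := by
  have htr : ∀ (b : F) (j : Fin g), Algebra.trace ℚ F (b * s' j) = r.repr b j := by
    intro b j
    conv_lhs => rw [← r.sum_repr b]
    rw [Finset.sum_mul, map_sum]
    simp [smul_mul_assoc, hdual]
  have key : ∀ x : F, ∀ β : F ⊗[ℚ] F,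
      ((Algebra.traceForm ℚ F).tmul (Algebra.traceForm ℚ F)) β
        (∑ i, (x * r i) ⊗ₜ[ℚ] s' i) = Algebra.trace ℚ F (x * LinearMap.mul' ℚ F β) := by
    intro x β
    induction β using TensorProduct.induction_on with
    | zero => simp
    | tmul a b =>
        rw [map_sum]
        simp only [LinearMap.BilinForm.tensorDistrib_tmul, Algebra.traceForm_apply,
          LinearMap.mul'_apply, htr, smul_eq_mul]
        have : ∀ i, r.repr b i * Algebra.trace ℚ F (a * (x * r i))
            = Algebra.trace ℚ F (a * x * (r.repr b i • r i)) := by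
          intro i
          rw [mul_smul_comm, map_smul, smul_eq_mul, mul_assoc]
        rw [Finset.sum_congr rfl fun i _ => this i, ← map_sum, ← Finset.mul_sum, r.sum_repr b]
        congr 1
        ring
    | add β₁ β₂ h₁ h₂ =>
        rw [map_add, LinearMap.add_apply, h₁, h₂, map_add, mul_add, map_add]
  constructor
  · intro h
    refine (traceForm_nondegenerate ℚ F).1 _ fun x => ?_
    rw [Algebra.traceForm_apply, mul_comm, ← key x α, h x]
  · intro h x
    rw [key x α, h, mul_zero, map_zero]
end

section
/- Let V be a finite-dimensional vector space over ℚ (or any infinite field), let C ⊆ V be a subset and N ⊆ V a linear subspace with N ⊊ C in the sense that C strictly contains N. Let A ⊆ V be a linear subspace with C ∩ A ⊆ N. If the image of C in V/N is nontrivial (i.e. C ⊄ N), then the image of A in V/N is a proper subspace of V/N; equivalently, dim A − dim(A ∩ N) < dim V − dim N. -/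
/-- Linear-algebra core of "the RM-torus has dimension at most g−1".  Let `V` be a
finite-dimensional `ℚ`-vector space, `A, N` subspaces, and `C` a (convex) cone containing `N`
(closed under nonnegative rational scaling and under addition).  If `C ∩ A ⊆ N` and `C` is not
contained in `N`, then `dim A − dim(A ∩ N) < dim V − dim N`. -/
theorem stmt5 (V : Type) [AddCommGroup V] [Module ℚ V] [FiniteDimensional ℚ V]
    (A N : Submodule ℚ V) (C : Set V)
    (hNC : (N : Set V) ⊆ C)
    (hsmul : ∀ (q : ℚ), 0 ≤ q → ∀ x ∈ C, q • x ∈ C)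
    (hadd : ∀ x ∈ C, ∀ y ∈ C, x + y ∈ C)
    (hCA : C ∩ (A : Set V) ⊆ (N : Set V))
    (hCnotN : ¬ C ⊆ (N : Set V)) :
    Module.finrank ℚ A - Module.finrank ℚ (A ⊓ N : Submodule ℚ V)
      < Module.finrank ℚ V - Module.finrank ℚ N := by
  obtain ⟨c, hcC, hcN⟩ := Set.not_subset.mp hCnotN
  have hsup : A ⊔ N ≠ ⊤ := by
    intro htop
    have hc : c ∈ A ⊔ N := by rw [htop]; exact Submodule.mem_top
    obtain ⟨a, haA, n, hnN, hrfl⟩ := Submodule.mem_sup.mp hc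
    have hnegn : -n ∈ C := hNC (N.neg_mem hnN)
    have haC : a ∈ C := by
      have := hadd c hcC (-n) hnegn
      have heq : c + -n = a := by rw [← hrfl]; abel
      rwa [heq] at this
    have : a ∈ N := hCA ⟨haC, haA⟩
    exact hcN (by rw [← hrfl]; exact N.add_mem this hnN)
  have h1 : Module.finrank ℚ (A ⊔ N : Submodule ℚ V) + Module.finrank ℚ (A ⊓ N : Submodule ℚ V)
      = Module.finrank ℚ A + Module.finrank ℚ N :=
    Submodule.finrank_sup_add_finrank_inf_eq A N
  have h2 : Module.finrank ℚ (A ⊔ N : Submodule ℚ V) < Module.finrank ℚ V :=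
    Submodule.finrank_lt hsup
  have h3 : Module.finrank ℚ N ≤ Module.finrank ℚ (A ⊔ N : Submodule ℚ V) :=
    Submodule.finrank_mono le_sup_right
  have h4 : Module.finrank ℚ (A ⊓ N : Submodule ℚ V) ≤ Module.finrank ℚ A :=
    Submodule.finrank_mono inf_le_left
  omega
end
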